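/- Let H be the subgroup of GL₂(ℤ/49ℤ) generated by the six matrices [[1,0],[37,48]], [[20,4],[18,21]], [[31,17],[3,23]], [[22,0],[0,22]], [[34,26],[19,16]], [[33,26],[19,15]]. Let C_s⁺(49) be the subgroup of GL₂(ℤ/49ℤ) consisting of all invertible matrices that are diagonal or antidiagonal. Then there exists g ∈ GL₂(ℤ/49ℤ) such that g·H·g⁻¹ is a subgroup of C_s⁺(49) of index 7. -/

import Mathlib

open Matrix

open scoped MatrixGroups

/-- The six generating matrices over `ℤ/49ℤ`. -/
def genMatrices : Set (Matrix (Fin 2) (Fin 2) (ZMod 49)) :=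
  {!![1, 0; 37, 48], !![20, 4; 18, 21], !![31, 17; 3, 23],
   !![22, 0; 0, 22], !![34, 26; 19, 16], !![33, 26; 19, 15]}

/-- The subgroup `H ≤ GL₂(ℤ/49ℤ)` generated by the six matrices. -/
def Hsub : Subgroup (GL (Fin 2) (ZMod 49)) :=
  Subgroup.closure {g : GL (Fin 2) (ZMod 49) |
    (g : Matrix (Fin 2) (Fin 2) (ZMod 49)) ∈ genMatrices}

/-- An element of `GL₂(ℤ/49ℤ)` is diagonal or antidiagonal. -/
def IsDiagOrAntidiag (g : GL (Fin 2) (ZMod 49)) : Prop :=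
  ((g : Matrix (Fin 2) (Fin 2) (ZMod 49)) 0 1 = 0 ∧
    (g : Matrix (Fin 2) (Fin 2) (ZMod 49)) 1 0 = 0) ∨
  ((g : Matrix (Fin 2) (Fin 2) (ZMod 49)) 0 0 = 0 ∧
    (g : Matrix (Fin 2) (Fin 2) (ZMod 49)) 1 1 = 0)

/-- `C_s⁺(49)`: the normalizer of the split Cartan, i.e. the subgroup of all
invertible diagonal or antidiagonal matrices over `ℤ/49ℤ`. -/
def CsPlus49 : Subgroup (GL (Fin 2) (ZMod 49)) :=
  Subgroup.closure {g | IsDiagOrAntidiag g}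

/-! ### Auxiliary definitions and lemmas -/

section Aux

abbrev R49 := ZMod 49
abbrev Mat2 := Matrix (Fin 2) (Fin 2) R49
abbrev GL2 := GL (Fin 2) R49

instance : Nontrivial R49 := ⟨⟨0, 1, by decide⟩⟩

lemma mul_ent (A B : Mat2) (i j : Fin 2) :
    (A * B) i j = A i 0 * B 0 j + A i 1 * B 1 j := by
  rw [Matrix.mul_apply, Fin.sum_univ_two]

lemma diag_mul (a b c d : R49) : (!![a,0;0,b] : Mat2) * !![c,0;0,d] = !![a*c, 0; 0, b*d] := by
  rw [Matrix.mul_fin_two]; congr 1 <;> ring_nf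

lemma anti_mul (a b c d : R49) : (!![0,a;b,0] : Mat2) * !![0,c;d,0] = !![a*d, 0; 0, b*c] := by
  rw [Matrix.mul_fin_two]; congr 1 <;> ring_nf

lemma diag_anti_mul (a b : R49) : (!![a,0;0,b] : Mat2) * !![0,1;1,0] = !![0,a;b,0] := by
  rw [Matrix.mul_fin_two]; congr 1 <;> ring_nf

def Pk (A : Mat2) : Prop :=
  (A 0 1 = 0 ∧ A 1 0 = 0 ∧ A 0 0 ^ 6 = A 1 1 ^ 6) ∨
  (A 0 0 = 0 ∧ A 1 1 = 0 ∧ A 0 1 ^ 6 = A 1 0 ^ 6)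

instance : DecidablePred Pk := fun _ => inferInstanceAs (Decidable (_ ∨ _))

lemma unit_entries_diag (x : GL2) (h01 : (x : Mat2) 0 1 = 0) (h10 : (x : Mat2) 1 0 = 0) :
    IsUnit ((x : Mat2) 0 0) ∧ IsUnit ((x : Mat2) 1 1) := by
  have hdet : IsUnit ((x : Mat2).det) := ((Matrix.isUnit_iff_isUnit_det _).mp x.isUnit)
  rw [Matrix.det_fin_two, h01, h10, zero_mul, sub_zero] at hdet
  exact ⟨isUnit_of_mul_isUnit_left hdet, isUnit_of_mul_isUnit_right hdet⟩

lemma unit_entries_anti (x : GL2) (h00 : (x : Mat2) 0 0 = 0) (h11 : (x : Mat2) 1 1 = 0) :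
    IsUnit ((x : Mat2) 0 1) ∧ IsUnit ((x : Mat2) 1 0) := by
  have hdet : IsUnit ((x : Mat2).det) := ((Matrix.isUnit_iff_isUnit_det _).mp x.isUnit)
  rw [Matrix.det_fin_two, h00, h11, zero_mul, zero_sub, IsUnit.neg_iff] at hdet
  exact ⟨isUnit_of_mul_isUnit_left hdet, isUnit_of_mul_isUnit_right hdet⟩

lemma gl_mul_inv_ent (x : GL2) (i j : Fin 2) :
    (x : Mat2) i 0 * (↑x⁻¹ : Mat2) 0 j + (x : Mat2) i 1 * (↑x⁻¹ : Mat2) 1 j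
      = (1 : Mat2) i j := by
  rw [← mul_ent, ← Units.val_mul, mul_inv_cancel, Units.val_one]

/-- The subgroup of invertible diagonal-or-antidiagonal matrices. -/
def Csub : Subgroup GL2 where
  carrier := {g | IsDiagOrAntidiag g}
  one_mem' := by left; constructor <;> decide
  mul_mem' := by
    intro a b ha hb
    have key : ∀ i j : Fin 2, ((a * b : GL2) : Mat2) i j
        = (a : Mat2) i 0 * (b : Mat2) 0 j + (a : Mat2) i 1 * (b : Mat2) 1 j := by
      intro i j; rw [Units.val_mul, mul_ent]
    rcases ha with ⟨a1, a2⟩ | ⟨a1, a2⟩ <;> rcases hb with ⟨b1, b2⟩ | ⟨b1, b2⟩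
    · left; constructor <;> simp only [key, a1, a2, b1, b2, mul_zero, zero_mul, add_zero, zero_add]
    · right; constructor <;> simp only [key, a1, a2, b1, b2, mul_zero, zero_mul, add_zero, zero_add]
    · right; constructor <;> simp only [key, a1, a2, b1, b2, mul_zero, zero_mul, add_zero, zero_add]
    · left; constructor <;> simp only [key, a1, a2, b1, b2, mul_zero, zero_mul, add_zero, zero_add]
  inv_mem' := by
    intro x hx
    have e01 := gl_mul_inv_ent x 0 1
    have e10 := gl_mul_inv_ent x 1 0
    rw [Matrix.one_apply_ne (by decide)] at e01
    rw [Matrix.one_apply_ne (by decide)] at e10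
    rcases hx with ⟨a1, a2⟩ | ⟨a1, a2⟩
    · obtain ⟨hu0, hu1⟩ := unit_entries_diag x a1 a2
      rw [a1, zero_mul, add_zero] at e01
      rw [a2, zero_mul, zero_add] at e10
      exact Or.inl ⟨hu0.mul_left_cancel (by rw [e01, mul_zero]),
        hu1.mul_left_cancel (by rw [e10, mul_zero])⟩
    · obtain ⟨hu0, hu1⟩ := unit_entries_anti x a1 a2
      rw [a1, zero_mul, zero_add] at e01
      rw [a2, zero_mul, add_zero] at e10
      exact Or.inr ⟨hu1.mul_left_cancel (by rw [e10, mul_zero]),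
        hu0.mul_left_cancel (by rw [e01, mul_zero])⟩

/-- The candidate image subgroup: diagonal matrices `diag(a,d)` with `a⁶ = d⁶`
together with antidiagonal matrices `antidiag(b,c)` with `b⁶ = c⁶`. -/
def Ksub : Subgroup GL2 where
  carrier := {x | Pk (x : Mat2)}
  one_mem' := by left; refine ⟨?_, ?_, ?_⟩ <;> decide
  mul_mem' := by
    intro a b ha hb
    have key : Pk ((a : Mat2) * (b : Mat2)) := by
      rcases ha with ⟨a1, a2, a3⟩ | ⟨a1, a2, a3⟩ <;> rcases hb with ⟨b1, b2, b3⟩ | ⟨b1, b2, b3⟩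
      · left
        refine ⟨?_, ?_, ?_⟩
        · simp only [mul_ent, a1, a2, b1, b2, mul_zero, zero_mul, add_zero, zero_add]
        · simp only [mul_ent, a1, a2, b1, b2, mul_zero, zero_mul, add_zero, zero_add]
        · simp only [mul_ent, a1, a2, b1, b2, mul_zero, zero_mul, add_zero, zero_add]
          rw [mul_pow, mul_pow, a3, b3]
      · right
        refine ⟨?_, ?_, ?_⟩
        · simp only [mul_ent, a1, a2, b1, b2, mul_zero, zero_mul, add_zero, zero_add]
        · simp only [mul_ent, a1, a2, b1, b2, mul_zero, zero_mul, add_zero, zero_add]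
        · simp only [mul_ent, a1, a2, b1, b2, mul_zero, zero_mul, add_zero, zero_add]
          rw [mul_pow, mul_pow, a3, b3]
      · right
        refine ⟨?_, ?_, ?_⟩
        · simp only [mul_ent, a1, a2, b1, b2, mul_zero, zero_mul, add_zero, zero_add]
        · simp only [mul_ent, a1, a2, b1, b2, mul_zero, zero_mul, add_zero, zero_add]
        · simp only [mul_ent, a1, a2, b1, b2, mul_zero, zero_mul, add_zero, zero_add]
          rw [mul_pow, mul_pow, a3, b3]
      · left
        refine ⟨?_, ?_, ?_⟩
        · simp only [mul_ent, a1, a2, b1, b2, mul_zero, zero_mul, add_zero, zero_add]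
        · simp only [mul_ent, a1, a2, b1, b2, mul_zero, zero_mul, add_zero, zero_add]
        · simp only [mul_ent, a1, a2, b1, b2, mul_zero, zero_mul, add_zero, zero_add]
          rw [mul_pow, mul_pow, a3, ← b3]
    show Pk ((a * b : GL2) : Mat2)
    rw [Units.val_mul]; exact key
  inv_mem' := by
    intro x hx
    set A := (x : Mat2) with hA
    set B := ((x⁻¹ : GL2) : Mat2) with hB
    have e00 := gl_mul_inv_ent x 0 0
    have e01 := gl_mul_inv_ent x 0 1
    have e10 := gl_mul_inv_ent x 1 0
    have e11 := gl_mul_inv_ent x 1 1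
    rw [Matrix.one_apply_eq] at e00 e11
    rw [Matrix.one_apply_ne (by decide)] at e01
    rw [Matrix.one_apply_ne (by decide)] at e10
    rcases hx with ⟨a1, a2, a3⟩ | ⟨a1, a2, a3⟩
    · obtain ⟨hu0, hu1⟩ := unit_entries_diag x a1 a2
      rw [a1, zero_mul, add_zero] at e00 e01
      rw [a2, zero_mul, zero_add] at e10 e11
      have b01 : B 0 1 = 0 := hu0.mul_left_cancel (by rw [e01, mul_zero])
      have b10 : B 1 0 = 0 := hu1.mul_left_cancel (by rw [e10, mul_zero])
      have p1 : A 0 0 ^ 6 * B 0 0 ^ 6 = 1 := by rw [← mul_pow, e00, one_pow]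
      have p2 : A 0 0 ^ 6 * B 1 1 ^ 6 = 1 := by rw [a3, ← mul_pow, e11, one_pow]
      left
      refine ⟨b01, b10, ?_⟩
      calc B 0 0 ^ 6 = B 0 0 ^ 6 * (A 0 0 ^ 6 * B 1 1 ^ 6) := by rw [p2, mul_one]
        _ = (A 0 0 ^ 6 * B 0 0 ^ 6) * B 1 1 ^ 6 := by ring
        _ = B 1 1 ^ 6 := by rw [p1, one_mul]
    · obtain ⟨hu0, hu1⟩ := unit_entries_anti x a1 a2
      rw [a1, zero_mul, zero_add] at e00 e01
      rw [a2, zero_mul, add_zero] at e10 e11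
      have b00 : B 0 0 = 0 := hu1.mul_left_cancel (by rw [e10, mul_zero])
      have b11 : B 1 1 = 0 := hu0.mul_left_cancel (by rw [e01, mul_zero])
      have p1 : A 0 1 ^ 6 * B 1 0 ^ 6 = 1 := by rw [← mul_pow, e00, one_pow]
      have p2 : A 0 1 ^ 6 * B 0 1 ^ 6 = 1 := by rw [a3, ← mul_pow, e11, one_pow]
      right
      refine ⟨b00, b11, ?_⟩
      calc B 0 1 ^ 6 = B 0 1 ^ 6 * (A 0 1 ^ 6 * B 1 0 ^ 6) := by rw [p1, mul_one]
        _ = (A 0 1 ^ 6 * B 0 1 ^ 6) * B 1 0 ^ 6 := by ring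
        _ = B 1 0 ^ 6 := by rw [p2, one_mul]

lemma Ksub_le_Csub : Ksub ≤ Csub := by
  intro x hx
  rcases hx with ⟨h1, h2, _⟩ | ⟨h1, h2, _⟩
  · exact Or.inl ⟨h1, h2⟩
  · exact Or.inr ⟨h1, h2⟩

/-! ### Units of `ZMod 49` -/

def u3 : R49ˣ := ⟨3, 33, by decide, by decide⟩
def u6 : R49ˣ := ⟨31, 19, by decide, by decide⟩

lemma orderOf_u3 : orderOf u3 = 42 := by
  rw [orderOf_eq_iff (by norm_num)]; exact ⟨by decide, by decide⟩

lemma orderOf_u6 : orderOf u6 = 6 := by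
  rw [orderOf_eq_iff (by norm_num)]; exact ⟨by decide, by decide⟩

lemma card_units_49 : Nat.card R49ˣ = 42 := by
  rw [Nat.card_eq_fintype_card, ZMod.card_units_eq_totient]; decide

lemma zpowers_u3 : Subgroup.zpowers u3 = ⊤ := by
  apply Subgroup.eq_top_of_card_eq
  rw [Nat.card_zpowers, orderOf_u3, card_units_49]

lemma exists_zpow_u3 (u : R49ˣ) : ∃ k : ℤ, u3 ^ k = u :=
  Subgroup.mem_zpowers_iff.mp (zpowers_u3 ▸ Subgroup.mem_top u)

def S6 : Subgroup R49ˣ where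
  carrier := {u | u ^ 6 = 1}
  one_mem' := one_pow 6
  mul_mem' := by intro a b ha hb; show (a*b)^6 = 1; rw [mul_pow, ha, hb, mul_one]
  inv_mem' := by intro a ha; show (a⁻¹)^6 = 1; rw [inv_pow, ha, inv_one]

lemma u3_pow7 : u3 ^ (7:ℕ) = u6 := by decide

lemma S6_eq : S6 = Subgroup.zpowers u6 := by
  apply le_antisymm
  · intro u hu
    obtain ⟨k, hk⟩ := exists_zpow_u3 u
    have h6 : u3 ^ (k * 6) = 1 := by
      rw [_root_.zpow_mul, hk]
      exact_mod_cast hu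
    have hdvd : ((42:ℕ):ℤ) ∣ k * 6 := by
      rw [← orderOf_u3]; exact orderOf_dvd_iff_zpow_eq_one.mpr h6
    obtain ⟨m, hm⟩ := hdvd
    have hk7 : k = 7 * m := by omega
    refine ⟨m, ?_⟩
    show u6 ^ m = u
    rw [← hk, hk7, ← u3_pow7, ← zpow_natCast u3 7, ← _root_.zpow_mul]
    norm_num
  · intro u hu
    obtain ⟨m, hm⟩ := hu
    rw [← hm]
    exact Subgroup.zpow_mem S6 (show u6 ^ (6:ℕ) = 1 by decide : u6 ∈ S6) m

lemma card_S6 : Nat.card S6 = 6 := by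
  rw [S6_eq, Nat.card_zpowers, orderOf_u6]

lemma mem_S6_of (au du : R49ˣ) (h : (au : R49) ^ 6 = (du : R49) ^ 6) :
    au * du⁻¹ ∈ S6 := by
  show (au * du⁻¹) ^ 6 = 1
  apply Units.ext
  rw [Units.val_pow_eq_pow_val, Units.val_mul, mul_pow, Units.val_one]
  calc (au : R49) ^ 6 * ((du⁻¹ : R49ˣ) : R49) ^ 6
      = (du : R49) ^ 6 * ((du⁻¹ : R49ˣ) : R49) ^ 6 := by rw [h]
    _ = ((du : R49) * ((du⁻¹ : R49ˣ) : R49)) ^ 6 := (mul_pow _ _ 6).symm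
    _ = 1 := by rw [Units.mul_inv, one_pow]

lemma mul_cancel_aux (a b : R49ˣ) : b * (a * b⁻¹) = a := by
  rw [mul_comm a, ← mul_assoc, mul_inv_cancel, one_mul]

/-! ### Diagonal / antidiagonal units -/

def dU (u v : R49ˣ) : GL2 :=
  ⟨!![↑u,0;0,↑v], !![↑u⁻¹,0;0,↑v⁻¹],
   by rw [diag_mul, Units.mul_inv, Units.mul_inv, Matrix.one_fin_two],
   by rw [diag_mul, Units.inv_mul, Units.inv_mul, Matrix.one_fin_two]⟩

def aU (u v : R49ˣ) : GL2 :=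
  ⟨!![0,↑u;↑v,0], !![0,↑v⁻¹;↑u⁻¹,0],
   by rw [anti_mul, Units.mul_inv, Units.mul_inv, Matrix.one_fin_two],
   by rw [anti_mul, Units.inv_mul, Units.inv_mul, Matrix.one_fin_two]⟩

def φd : R49ˣ →* GL2 where
  toFun u := dU u 1
  map_one' := by
    apply Units.ext
    show (!![((1:R49ˣ):R49),0;0,((1:R49ˣ):R49)] : Mat2) = 1
    rw [Units.val_one, Matrix.one_fin_two]
  map_mul' u v := by
    apply Units.ext
    show (!![((u*v:R49ˣ):R49),0;0,((1:R49ˣ):R49)] : Mat2)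
        = !![(u:R49),0;0,((1:R49ˣ):R49)] * !![(v:R49),0;0,((1:R49ˣ):R49)]
    rw [diag_mul, Units.val_mul, Units.val_one, one_mul]

def φs : R49ˣ →* GL2 where
  toFun u := dU u u
  map_one' := by
    apply Units.ext
    show (!![((1:R49ˣ):R49),0;0,((1:R49ˣ):R49)] : Mat2) = 1
    rw [Units.val_one, Matrix.one_fin_two]
  map_mul' u v := by
    apply Units.ext
    show (!![((u*v:R49ˣ):R49),0;0,((u*v:R49ˣ):R49)] : Mat2)
        = !![(u:R49),0;0,(u:R49)] * !![(v:R49),0;0,(v:R49)]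
    rw [diag_mul, Units.val_mul]

def wGL : GL2 := ⟨!![0,1;1,0], !![0,1;1,0], by decide, by decide⟩
def gU : GL2 := ⟨!![5,25;1,25], !![37,12;24,27], by decide, by decide⟩
def H1 : GL2 := ⟨!![1,0;37,48], !![1,0;37,48], by decide, by decide⟩
def H2 : GL2 := ⟨!![20,4;18,21], !![14,9;16,4], by decide, by decide⟩
def H3 : GL2 := ⟨!![31,17;3,23], !![46,15;43,13], by decide, by decide⟩
def H4 : GL2 := ⟨!![22,0;0,22], !![29,0;0,29], by decide, by decide⟩
def H5 : GL2 := ⟨!![34,26;19,16], !![16,23;30,34], by decide, by decide⟩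
def H6 : GL2 := ⟨!![33,26;19,15], !![15,23;30,33], by decide, by decide⟩

/-- The conjugated image subgroup. -/
def Mmap : Subgroup GL2 := Subgroup.map (MulAut.conj gU).toMonoidHom Hsub

lemma hH1 : H1 ∈ Hsub := Subgroup.subset_closure (Or.inl rfl)
lemma hH2 : H2 ∈ Hsub := Subgroup.subset_closure (Or.inr (Or.inl rfl))
lemma hH3 : H3 ∈ Hsub := Subgroup.subset_closure (Or.inr (Or.inr (Or.inl rfl)))
lemma hH4 : H4 ∈ Hsub := Subgroup.subset_closure (Or.inr (Or.inr (Or.inr (Or.inl rfl))))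
lemma hH5 : H5 ∈ Hsub :=
  Subgroup.subset_closure (Or.inr (Or.inr (Or.inr (Or.inr (Or.inl rfl)))))
lemma hH6 : H6 ∈ Hsub :=
  Subgroup.subset_closure (Or.inr (Or.inr (Or.inr (Or.inr (Or.inr rfl)))))

lemma w_mem : wGL ∈ Mmap :=
  ⟨H1 * H5 * H6, mul_mem (mul_mem hH1 hH5) hH6, by
    apply Units.ext
    show ((gU * (H1 * H5 * H6) * gU⁻¹ : GL2) : Mat2) = (wGL : Mat2)
    decide⟩

lemma d6_mem : φd u6 ∈ Mmap :=
  ⟨H2 * H3 * H3 * H4 * H4 * H4 * H4 * H4,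
   mul_mem (mul_mem (mul_mem (mul_mem (mul_mem (mul_mem (mul_mem hH2 hH3) hH3) hH4) hH4) hH4)
     hH4) hH4, by
    apply Units.ext
    show ((gU * (H2 * H3 * H3 * H4 * H4 * H4 * H4 * H4) * gU⁻¹ : GL2) : Mat2)
        = ((φd u6 : GL2) : Mat2)
    decide⟩

lemma s3_mem : φs u3 ∈ Mmap :=
  ⟨H1 * H3 * H3 * H1 * H4 * H4 * H5,
   mul_mem (mul_mem (mul_mem (mul_mem (mul_mem (mul_mem hH1 hH3) hH3) hH1) hH4) hH4) hH5, by
    apply Units.ext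
    show ((gU * (H1 * H3 * H3 * H1 * H4 * H4 * H5) * gU⁻¹ : GL2) : Mat2)
        = ((φs u3 : GL2) : Mat2)
    decide⟩

lemma φs_mem (u : R49ˣ) : φs u ∈ Mmap := by
  obtain ⟨k, rfl⟩ := exists_zpow_u3 u
  rw [map_zpow]
  exact Subgroup.zpow_mem Mmap s3_mem k

lemma φd_mem (s : R49ˣ) (hs : s ∈ S6) : φd s ∈ Mmap := by
  rw [S6_eq] at hs
  obtain ⟨m, rfl⟩ := hs
  show φd (u6 ^ m) ∈ Mmap
  rw [map_zpow]
  exact Subgroup.zpow_mem Mmap d6_mem m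

lemma map_le_K : Mmap ≤ Ksub := by
  rw [Mmap, Hsub, MonoidHom.map_closure]
  apply (Subgroup.closure_le _).mpr
  rintro y ⟨x, hx, rfl⟩
  simp only [genMatrices, Set.mem_insert_iff, Set.mem_singleton_iff, Set.mem_setOf_eq] at hx
  show Pk (((MulAut.conj gU).toMonoidHom x : GL2) : Mat2)
  have hval : (((MulAut.conj gU).toMonoidHom x : GL2) : Mat2)
      = !![5,25;1,25] * (x : Mat2) * !![37,12;24,27] := rfl
  rcases hx with h | h | h | h | h | h <;> rw [hval, h] <;> decide

lemma K_le_map : Ksub ≤ Mmap := by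
  intro x hx
  rcases hx with ⟨h01, h10, hpow⟩ | ⟨h00, h11, hpow⟩
  · obtain ⟨hu0, hu1⟩ := unit_entries_diag x h01 h10
    obtain ⟨au, hau⟩ := hu0
    obtain ⟨du, hdu⟩ := hu1
    have hs : au * du⁻¹ ∈ S6 := mem_S6_of au du (by rw [hau, hdu, hpow])
    have hx2 : x = φs du * φd (au * du⁻¹) := by
      apply Units.ext
      show (x : Mat2) = !![(du:R49),0;0,(du:R49)] * !![((au * du⁻¹ : R49ˣ):R49),0;0,((1:R49ˣ):R49)]
      rw [diag_mul, Units.val_one, mul_one, ← Units.val_mul, mul_cancel_aux]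
      conv_lhs => rw [Matrix.eta_fin_two (x : Mat2)]
      rw [h01, h10, hau, hdu]
    rw [hx2]
    exact mul_mem (φs_mem du) (φd_mem _ hs)
  · obtain ⟨hu0, hu1⟩ := unit_entries_anti x h00 h11
    obtain ⟨bu, hbu⟩ := hu0
    obtain ⟨cu, hcu⟩ := hu1
    have hs : bu * cu⁻¹ ∈ S6 := mem_S6_of bu cu (by rw [hbu, hcu, hpow])
    have hx2 : x = φs cu * φd (bu * cu⁻¹) * wGL := by
      apply Units.ext
      show (x : Mat2)
        = !![(cu:R49),0;0,(cu:R49)] * !![((bu * cu⁻¹ : R49ˣ):R49),0;0,((1:R49ˣ):R49)] * !![0,1;1,0]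
      rw [diag_mul, Units.val_one, mul_one, ← Units.val_mul, mul_cancel_aux, diag_anti_mul]
      conv_lhs => rw [Matrix.eta_fin_two (x : Mat2)]
      rw [h00, h11, hbu, hcu]
    rw [hx2]
    exact mul_mem (mul_mem (φs_mem cu) (φd_mem _ hs)) w_mem

lemma conj_map_eq : Mmap = Ksub := le_antisymm map_le_K K_le_map

/-! ### Cardinalities -/

def jC : (R49ˣ × R49ˣ) × Bool → Csub
  | ((u, v), false) => ⟨dU u v, Or.inl ⟨rfl, rfl⟩⟩
  | ((u, v), true) => ⟨aU u v, Or.inr ⟨rfl, rfl⟩⟩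

lemma jC_bij : Function.Bijective jC := by
  constructor
  · rintro ⟨⟨u, v⟩, (_|_)⟩ ⟨⟨u', v'⟩, (_|_)⟩ h <;>
      have hm : ((jC _ : GL2) : Mat2) = ((jC _ : GL2) : Mat2) :=
        congrArg (fun z : Csub => ((z : GL2) : Mat2)) h
    · have e0 : (u : R49) = u' := congrFun (congrFun hm 0) 0
      have e1 : (v : R49) = v' := congrFun (congrFun hm 1) 1
      rw [Units.ext e0, Units.ext e1]
    · have e0 : (u : R49) = 0 := congrFun (congrFun hm 0) 0
      exact absurd e0 u.ne_zero
    · have e0 : (0 : R49) = u' := congrFun (congrFun hm 0) 0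
      exact absurd e0.symm u'.ne_zero
    · have e0 : (u : R49) = u' := congrFun (congrFun hm 0) 1
      have e1 : (v : R49) = v' := congrFun (congrFun hm 1) 0
      rw [Units.ext e0, Units.ext e1]
  · rintro ⟨x, hx⟩
    rcases hx with ⟨h01, h10⟩ | ⟨h00, h11⟩
    · obtain ⟨hu0, hu1⟩ := unit_entries_diag x h01 h10
      obtain ⟨au, hau⟩ := hu0
      obtain ⟨du, hdu⟩ := hu1
      refine ⟨((au, du), false), ?_⟩
      apply Subtype.ext
      apply Units.ext
      show (!![(au:R49),0;0,(du:R49)] : Mat2) = (x : Mat2)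
      conv_rhs => rw [Matrix.eta_fin_two (x : Mat2)]
      rw [h01, h10, hau, hdu]
    · obtain ⟨hu0, hu1⟩ := unit_entries_anti x h00 h11
      obtain ⟨bu, hbu⟩ := hu0
      obtain ⟨cu, hcu⟩ := hu1
      refine ⟨((bu, cu), true), ?_⟩
      apply Subtype.ext
      apply Units.ext
      show (!![0,(bu:R49);(cu:R49),0] : Mat2) = (x : Mat2)
      conv_rhs => rw [Matrix.eta_fin_two (x : Mat2)]
      rw [h00, h11, hbu, hcu]

def jK : (R49ˣ × S6) × Bool → Ksub
  | ((u, s), false) => ⟨dU (u * (s : R49ˣ)) u, Or.inl ⟨rfl, rfl, by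
      show ((u * (s:R49ˣ) : R49ˣ) : R49) ^ 6 = (u : R49) ^ 6
      have hs6 : (((s : R49ˣ) : R49)) ^ 6 = 1 := by
        rw [← Units.val_pow_eq_pow_val, (s.2 : (s : R49ˣ) ^ 6 = 1), Units.val_one]
      rw [Units.val_mul, mul_pow, hs6, mul_one]⟩⟩
  | ((u, s), true) => ⟨aU (u * (s : R49ˣ)) u, Or.inr ⟨rfl, rfl, by
      show ((u * (s:R49ˣ) : R49ˣ) : R49) ^ 6 = (u : R49) ^ 6
      have hs6 : (((s : R49ˣ) : R49)) ^ 6 = 1 := by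
        rw [← Units.val_pow_eq_pow_val, (s.2 : (s : R49ˣ) ^ 6 = 1), Units.val_one]
      rw [Units.val_mul, mul_pow, hs6, mul_one]⟩⟩

lemma jK_bij : Function.Bijective jK := by
  constructor
  · rintro ⟨⟨u, s⟩, (_|_)⟩ ⟨⟨u', s'⟩, (_|_)⟩ h <;>
      have hm : ((jK _ : GL2) : Mat2) = ((jK _ : GL2) : Mat2) :=
        congrArg (fun z : Ksub => ((z : GL2) : Mat2)) h
    · have e1 : (u : R49) = u' := congrFun (congrFun hm 1) 1
      have e0 : ((u * (s:R49ˣ) : R49ˣ) : R49) = ((u' * (s':R49ˣ) : R49ˣ) : R49) :=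
        congrFun (congrFun hm 0) 0
      have hu : u = u' := Units.ext e1
      have hs : (s : R49ˣ) = (s' : R49ˣ) := by
        have := Units.ext e0
        rw [hu] at this
        exact mul_left_cancel this
      rw [hu, Subtype.ext hs]
    · have e0 : ((u * (s:R49ˣ) : R49ˣ) : R49) = 0 := congrFun (congrFun hm 0) 0
      exact absurd e0 (u * (s:R49ˣ)).ne_zero
    · have e0 : (0 : R49) = ((u' * (s':R49ˣ) : R49ˣ) : R49) := congrFun (congrFun hm 0) 0
      exact absurd e0.symm (u' * (s':R49ˣ)).ne_zero
    · have e1 : (u : R49) = u' := congrFun (congrFun hm 1) 0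
      have e0 : ((u * (s:R49ˣ) : R49ˣ) : R49) = ((u' * (s':R49ˣ) : R49ˣ) : R49) :=
        congrFun (congrFun hm 0) 1
      have hu : u = u' := Units.ext e1
      have hs : (s : R49ˣ) = (s' : R49ˣ) := by
        have := Units.ext e0
        rw [hu] at this
        exact mul_left_cancel this
      rw [hu, Subtype.ext hs]
  · rintro ⟨x, hx⟩
    rcases hx with ⟨h01, h10, hpow⟩ | ⟨h00, h11, hpow⟩
    · obtain ⟨hu0, hu1⟩ := unit_entries_diag x h01 h10
      obtain ⟨au, hau⟩ := hu0
      obtain ⟨du, hdu⟩ := hu1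
      have hs : au * du⁻¹ ∈ S6 := mem_S6_of au du (by rw [hau, hdu, hpow])
      refine ⟨((du, ⟨au * du⁻¹, hs⟩), false), ?_⟩
      apply Subtype.ext
      apply Units.ext
      show (!![((du * (au * du⁻¹) : R49ˣ) : R49),0;0,(du:R49)] : Mat2) = (x : Mat2)
      rw [mul_cancel_aux]
      conv_rhs => rw [Matrix.eta_fin_two (x : Mat2)]
      rw [h01, h10, hau, hdu]
    · obtain ⟨hu0, hu1⟩ := unit_entries_anti x h00 h11
      obtain ⟨bu, hbu⟩ := hu0
      obtain ⟨cu, hcu⟩ := hu1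
      have hs : bu * cu⁻¹ ∈ S6 := mem_S6_of bu cu (by rw [hbu, hcu, hpow])
      refine ⟨((cu, ⟨bu * cu⁻¹, hs⟩), true), ?_⟩
      apply Subtype.ext
      apply Units.ext
      show (!![0,((cu * (bu * cu⁻¹) : R49ˣ) : R49);(cu:R49),0] : Mat2) = (x : Mat2)
      rw [mul_cancel_aux]
      conv_rhs => rw [Matrix.eta_fin_two (x : Mat2)]
      rw [h00, h11, hbu, hcu]

lemma card_Csub : Nat.card Csub = 3528 := by
  rw [← Nat.card_congr (Equiv.ofBijective jC jC_bij), Nat.card_prod, Nat.card_prod,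
    card_units_49, Nat.card_eq_fintype_card]
  simp

lemma card_Ksub : Nat.card Ksub = 504 := by
  rw [← Nat.card_congr (Equiv.ofBijective jK jK_bij), Nat.card_prod, Nat.card_prod,
    card_units_49, card_S6, Nat.card_eq_fintype_card]
  simp

lemma CsPlus49_eq : CsPlus49 = Csub := Subgroup.closure_eq Csub

end Aux

/-- `C_s⁺(49)` consists exactly of the invertible diagonal and
antidiagonal matrices, and there is `g ∈ GL₂(ℤ/49ℤ)` such that `g·H·g⁻¹` is a
subgroup of `C_s⁺(49)` of index 7. -/
theorem stmt14 :
    (∀ x : GL (Fin 2) (ZMod 49), x ∈ CsPlus49 ↔ IsDiagOrAntidiag x) ∧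
    ∃ g : GL (Fin 2) (ZMod 49),
      Subgroup.map (MulAut.conj g).toMonoidHom Hsub ≤ CsPlus49 ∧
      Subgroup.relIndex (Subgroup.map (MulAut.conj g).toMonoidHom Hsub) CsPlus49 = 7 := by
  constructor
  · intro x
    rw [CsPlus49_eq]
    exact Iff.rfl
  · refine ⟨gU, ?_, ?_⟩
    · rw [show Subgroup.map (MulAut.conj gU).toMonoidHom Hsub = Mmap from rfl, conj_map_eq,
        CsPlus49_eq]
      exact Ksub_le_Csub
    · rw [show Subgroup.map (MulAut.conj gU).toMonoidHom Hsub = Mmap from rfl, conj_map_eq,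
        CsPlus49_eq]
      show (Ksub.subgroupOf Csub).index = 7
      have h1 := Subgroup.index_mul_card (Ksub.subgroupOf Csub)
      have h2 : Nat.card (Ksub.subgroupOf Csub) = Nat.card Ksub :=
        Nat.card_congr (Subgroup.subgroupOfEquivOfLe Ksub_le_Csub).toEquiv
      rw [h2, card_Ksub, card_Csub] at h1
      exact Nat.eq_of_mul_eq_mul_right (by norm_num : 0 < 504) (h1.trans (by norm_num))
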